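/- arXiv:2307.13347 — 3 statements merged into one kernel-verified Lean document; each statement's English description precedes it below -/
import Mathlib

section
/- Let h be a nonnegative integer-valued histogram with total mass ‖h‖₁ = M, and let τ > 0. The number of elements x with h(x) ≤ τ/10 that have h(x) ≥ 1, after merging, can be grouped into at most 20M/τ groups each with total mass at most τ/10 plus singletons; formally, the sum Σ_{x : h(x) ≤ τ/10} (h(x)/τ)^{b/2} over all such x is at most (20M/τ) · (1/10)^{b/2} · 2^{b/2} for any b ≥ 2. -/
open scoped Classical

/-- Combining tail elements: if `h : X → ℕ` is a histogram with total mass `M` and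
`b ≥ 2`, then `Σ_{x : h(x) ≤ τ/10} (h(x)/τ)^{b/2} ≤ (20M/τ)·(1/10)^{b/2}·2^{b/2}`. -/
theorem tail_group_bound {X : Type*} [Fintype X] (h : X → ℕ) (M : ℕ)
    (hM : ∑ x, h x = M) (τ b : ℝ) (hτ : 0 < τ) (hb : 2 ≤ b) :
    ∑ x ∈ Finset.univ.filter (fun x => (h x : ℝ) ≤ τ / 10),
        ((h x : ℝ) / τ) ^ (b / 2)
      ≤ (20 * M / τ) * (1 / 10 : ℝ) ^ (b / 2) * (2 : ℝ) ^ (b / 2) := by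
  have hexp : (0:ℝ) ≤ b / 2 - 1 := by linarith
  have hc : (0:ℝ) < (1/10 : ℝ) ^ (b/2 - 1 : ℝ) := Real.rpow_pos_of_pos (by norm_num) _
  have key : ∀ x ∈ Finset.univ.filter (fun x => (h x : ℝ) ≤ τ / 10),
      ((h x : ℝ) / τ) ^ (b / 2) ≤ ((h x : ℝ) / τ) * (1/10 : ℝ) ^ (b/2 - 1 : ℝ) := by
    intro x hx
    simp only [Finset.mem_filter] at hx
    set a : ℝ := (h x : ℝ) / τ with ha
    have ha0 : 0 ≤ a := div_nonneg (Nat.cast_nonneg _) hτ.le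
    have ha1 : a ≤ 1/10 := by
      rw [ha, div_le_div_iff₀ hτ (by norm_num)]
      linarith [hx.2]
    rcases eq_or_lt_of_le ha0 with h0 | h0
    · rw [← h0, Real.zero_rpow (by positivity)]
      positivity
    · have heq : a ^ (b/2 : ℝ) = a * a ^ (b/2 - 1 : ℝ) := by
        nth_rewrite 2 [← Real.rpow_one a]
        rw [← Real.rpow_add h0]
        ring_nf
      rw [heq]
      exact mul_le_mul_of_nonneg_left (Real.rpow_le_rpow ha0 ha1 hexp) ha0
  have step1 := Finset.sum_le_sum key
  have hsum : ∑ x ∈ Finset.univ.filter (fun x => (h x : ℝ) ≤ τ / 10), ((h x : ℝ) / τ)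
      ≤ (M : ℝ) / τ := by
    rw [← Finset.sum_div]
    gcongr
    calc ∑ x ∈ Finset.univ.filter (fun x => (h x : ℝ) ≤ τ / 10), (h x : ℝ)
        ≤ ∑ x, (h x : ℝ) :=
          Finset.sum_le_sum_of_subset_of_nonneg (Finset.filter_subset _ _)
            (fun i _ _ => Nat.cast_nonneg _)
      _ = (M : ℝ) := by rw [← Nat.cast_sum, hM]
  have hpow : (1/10 : ℝ) ^ (b/2 - 1 : ℝ) = 10 * (1/10 : ℝ) ^ (b/2 : ℝ) := by
    rw [Real.rpow_sub (by norm_num), Real.rpow_one]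
    ring
  have h2 : (1:ℝ) ≤ (2 : ℝ) ^ (b/2 : ℝ) :=
    Real.one_le_rpow (by norm_num) (by linarith)
  have hMτ : (0:ℝ) ≤ (M:ℝ) / τ := by positivity
  have hp10 : (0:ℝ) < (1/10 : ℝ) ^ (b/2 : ℝ) := Real.rpow_pos_of_pos (by norm_num) _
  calc ∑ x ∈ Finset.univ.filter (fun x => (h x : ℝ) ≤ τ / 10), ((h x : ℝ) / τ) ^ (b / 2)
      ≤ ((M:ℝ) / τ) * (1/10 : ℝ) ^ (b/2 - 1 : ℝ) :=
        by
        rw [← Finset.sum_mul] at step1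
        exact step1.trans (mul_le_mul_of_nonneg_right hsum hc.le)
    _ = 10 * ((M:ℝ) / τ) * (1/10 : ℝ) ^ (b/2 : ℝ) := by rw [hpow]; ring
    _ ≤ 20 * ((M:ℝ) / τ) * (1/10 : ℝ) ^ (b/2 : ℝ) * ((2:ℝ) ^ (b/2 : ℝ)) := by
        nlinarith [mul_nonneg hMτ hp10.le]
    _ = (20 * M / τ) * (1 / 10 : ℝ) ^ (b / 2) * (2 : ℝ) ^ (b / 2) := by ring
end

section
/- Suppose a histogram h over a finite domain has total mass at most mn (m, n positive integers), and each element is independently retained with probability at most 1/τ for an integer τ ≥ 1 with mn > 4τ. Then for R > 32, the number of retained distinct elements exceeds (2mn/τ)·log R with probability at most 1/(32R). -/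
open MeasureTheory ProbabilityTheory
open scoped Classical ENNReal

/-- If a histogram over a finite domain has total mass at most `mn` and each element is
independently retained with probability at most `1/τ` (with `τ ≥ 1`, `mn > 4τ`), then
for `R > 32` the number of retained distinct elements exceeds `(2mn/τ)·log R` with
probability at most `1/(32R)`. -/
theorem retained_count_bound {Ω : Type*} [MeasurableSpace Ω] (μ : Measure Ω)
    [IsProbabilityMeasure μ] (D m n τ R : ℕ) (hm : 0 < m) (hn : 0 < n)
    (hτ : 1 ≤ τ) (hmn : 4 * τ < m * n) (hR : 32 < R)
    (h : Fin D → ℕ) (hmass : ∑ x, h x ≤ m * n)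
    (keep : Fin D → Ω → Bool) (hmeas : ∀ x, Measurable (keep x))
    (hindep : iIndepFun keep μ)
    (hprob : ∀ x, μ (keep x ⁻¹' {true}) ≤ (τ : ℝ≥0∞)⁻¹) :
    μ {ω | (2 * (m * n : ℝ) / τ) * Real.log R
        < (Finset.univ.filter (fun x => keep x ω = true ∧ 0 < h x)).card}
      ≤ 1 / (32 * R) := by
  classical
  set s : Finset (Fin D) := Finset.univ.filter (fun x => 0 < h x) with hs
  -- basic numeric facts
  have hτR : (0:ℝ) < τ := by exact_mod_cast hτ
  have hRR : (33:ℝ) ≤ R := by exact_mod_cast hR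
  have hR0 : (0:ℝ) < R := by linarith
  set L : ℝ := Real.log R with hLdef
  have hexp1 : Real.exp 1 < 2.7182818286 := Real.exp_one_lt_d9
  have hL3 : (3:ℝ) ≤ L := by
    rw [hLdef, Real.le_log_iff_exp_le hR0]
    have h3eq : Real.exp 3 = (Real.exp 1) ^ 3 := by
      rw [← Real.exp_nat_mul]; norm_num
    have h3 : (Real.exp 1)^3 < (2.7182818286:ℝ)^3 :=
      pow_lt_pow_left₀ hexp1 (Real.exp_pos 1).le (by norm_num)
    have hcube : (2.7182818286:ℝ)^3 < 33 := by norm_num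
    linarith [h3eq, h3, hcube, hRR]
  have hL0 : (0:ℝ) < L := by linarith
  set t : ℝ := Real.log L with htdef
  have ht1 : (1:ℝ) ≤ t := by
    rw [htdef, Real.le_log_iff_exp_le hL0]
    nlinarith
  have ht0 : (0:ℝ) ≤ t := by linarith
  have hexpt : Real.exp t = L := Real.exp_log hL0
  set c : ℝ := (m*n : ℝ) / τ with hcdef
  have hc4 : (4:ℝ) ≤ c := by
    rw [hcdef, le_div_iff₀ hτR]
    have : (4*τ : ℝ) < (m*n : ℝ) := by exact_mod_cast hmn
    linarith
  -- cardinality of support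
  have hscard : (s.card : ℝ) ≤ (m*n : ℝ) := by
    have h1 : s.card ≤ ∑ x ∈ s, h x := by
      calc s.card = ∑ x ∈ s, 1 := by simp
      _ ≤ ∑ x ∈ s, h x := Finset.sum_le_sum (fun x hx => by
          exact Nat.succ_le_of_lt (Finset.mem_filter.mp hx).2)
    have h2 : ∑ x ∈ s, h x ≤ ∑ x, h x := Finset.sum_le_sum_of_subset (Finset.subset_univ _)
    exact_mod_cast le_trans h1 (le_trans h2 hmass)
  -- the indicator variables
  set X : Fin D → Ω → ℝ := fun x => (fun b => if b = true then (1:ℝ) else 0) ∘ keep x with hX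
  have hXmeas : ∀ x, Measurable (X x) := fun x =>
    (measurable_from_top).comp (hmeas x)
  have hXindep : iIndepFun X μ :=
    hindep.comp _ (fun _ => measurable_from_top)
  have hX01 : ∀ x ω, X x ω = 0 ∨ X x ω = 1 := by
    intro x ω; by_cases hb : keep x ω = true <;> simp [hX, hb]
  -- integrability of exp (t * X x)
  have hXint : ∀ x, Integrable (fun ω => Real.exp (t * X x ω)) μ := by
    intro x
    refine Integrable.mono' (integrable_const (Real.exp |t|))
      (((hXmeas x).const_mul t).exp.aestronglyMeasurable) ?_
    filter_upwards with ω
    rw [Real.norm_eq_abs, abs_of_pos (Real.exp_pos _), Real.exp_le_exp]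
    rcases hX01 x ω with h0 | h0 <;> rw [h0] <;> simp [abs_nonneg, le_abs_self]
  -- mgf bound for each variable
  have hmgf : ∀ x, mgf (X x) μ t ≤ Real.exp ((Real.exp t - 1) / τ) := by
    intro x
    have hset : MeasurableSet (keep x ⁻¹' {true}) := (hmeas x) (measurableSet_singleton true)
    have hp : (μ (keep x ⁻¹' {true})).toReal ≤ (τ:ℝ)⁻¹ := by
      have hb : ((τ:ℝ≥0∞))⁻¹ ≠ ⊤ := ENNReal.inv_ne_top.mpr
        (by exact_mod_cast Nat.one_le_iff_ne_zero.mp hτ)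
      have := ENNReal.toReal_mono hb (hprob x)
      simpa [ENNReal.toReal_inv] using this
    have hXind : X x = (keep x ⁻¹' {true}).indicator (1 : Ω → ℝ) := by
      funext ω
      by_cases hb : keep x ω = true <;> simp [hX, hb, Set.indicator_apply]
    have hXintg : Integrable (X x) μ := by
      rw [hXind]; exact (integrable_const (1:ℝ)).indicator hset
    have hmgf_eq : mgf (X x) μ t = 1 + (Real.exp t - 1) * (μ (keep x ⁻¹' {true})).toReal := by
      have heq : (fun ω => Real.exp (t * X x ω)) = fun ω => 1 + (Real.exp t - 1) * X x ω := by
        funext ω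
        rcases hX01 x ω with h0 | h0 <;> rw [h0] <;> simp
      rw [mgf, heq, integral_add (integrable_const 1) (hXintg.const_mul _),
        integral_const, integral_const_mul]
      have : ∫ ω, X x ω ∂μ = (μ (keep x ⁻¹' {true})).toReal := by
        rw [hXind, integral_indicator_one hset]; rfl
      simp [this]
    rw [hmgf_eq]
    have h1 : (Real.exp t - 1) * (μ (keep x ⁻¹' {true})).toReal ≤ (Real.exp t - 1) / τ := by
      have hnn : (0:ℝ) ≤ Real.exp t - 1 := by
        have := Real.one_le_exp ht0; linarith
      rw [div_eq_mul_inv]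
      exact mul_le_mul_of_nonneg_left hp hnn
    calc 1 + (Real.exp t - 1) * (μ (keep x ⁻¹' {true})).toReal
        ≤ 1 + (Real.exp t - 1) / τ := by linarith
      _ ≤ Real.exp ((Real.exp t - 1) / τ) := by
          have := Real.add_one_le_exp ((Real.exp t - 1) / τ); linarith
  -- event rewriting
  set a : ℝ := 2 * (m * n : ℝ) / τ * L with hadef
  have hcount : ∀ ω, ((Finset.univ.filter (fun x => keep x ω = true ∧ 0 < h x)).card : ℝ)
      = (∑ x ∈ s, X x) ω := by
    intro ω
    have hfe : Finset.univ.filter (fun x => keep x ω = true ∧ 0 < h x)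
        = s.filter (fun x => keep x ω = true) := by
      rw [hs, Finset.filter_filter]
      apply Finset.filter_congr
      intro x _; tauto
    rw [hfe, Finset.card_filter, Finset.sum_apply]
    push_cast
    refine Finset.sum_congr rfl (fun x _ => ?_)
    by_cases hb : keep x ω = true <;> simp [hX, hb]
  have hsub : {ω | a < ((Finset.univ.filter (fun x => keep x ω = true ∧ 0 < h x)).card : ℝ)}
      ⊆ {ω | a ≤ (∑ x ∈ s, X x) ω} := by
    intro ω hω
    simp only [Set.mem_setOf_eq] at hω ⊢
    rw [← hcount ω]; exact le_of_lt hω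
  -- Chernoff bound
  have hSint : Integrable (fun ω => Real.exp (t * (∑ x ∈ s, X x) ω)) μ :=
    hXindep.integrable_exp_mul_sum hXmeas (fun x _ => hXint x)
  have hcher := measure_ge_le_exp_mul_mgf (X := ∑ x ∈ s, X x) (μ := μ) (t := t) a ht0 hSint
  have hmgfS : mgf (∑ x ∈ s, X x) μ t ≤ Real.exp (c * (L - 1)) := by
    rw [hXindep.mgf_sum hXmeas]
    calc ∏ x ∈ s, mgf (X x) μ t ≤ ∏ _x ∈ s, Real.exp ((Real.exp t - 1) / τ) :=
          Finset.prod_le_prod (fun x _ => mgf_nonneg) (fun x _ => hmgf x)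
      _ = Real.exp ((Real.exp t - 1) / τ) ^ s.card := by rw [Finset.prod_const]
      _ = Real.exp (s.card * ((Real.exp t - 1) / τ)) := by
          rw [← Real.exp_nat_mul]
      _ ≤ Real.exp (c * (L - 1)) := by
          rw [Real.exp_le_exp, hexpt, hcdef]
          have h1 : (s.card : ℝ) * ((L - 1) / τ) ≤ (m*n:ℝ) * ((L-1)/τ) :=
            mul_le_mul_of_nonneg_right hscard
              (div_nonneg (by linarith) hτR.le)
          have h2 : (m*n:ℝ)/τ*(L-1) = (m*n:ℝ)*((L-1)/τ) := by ring
          linarith [h1]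
  -- numeric conclusion in ℝ
  have hreal : (μ {ω | a ≤ (∑ x ∈ s, X x) ω}).toReal ≤ 1 / (32 * (R:ℝ)) := by
    have hb : Real.exp (-t * a) * mgf (∑ x ∈ s, X x) μ t
        ≤ Real.exp (-t * a) * Real.exp (c * (L - 1)) :=
      mul_le_mul_of_nonneg_left hmgfS (le_of_lt (Real.exp_pos _))
    have hexp_le : Real.exp (-t * a) * Real.exp (c * (L - 1)) ≤ Real.exp (-(4 * L)) := by
      rw [← Real.exp_add, Real.exp_le_exp]
      have haeq : a = 2 * c * L := by rw [hadef, hcdef]; ring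
      rw [haeq]
      nlinarith [mul_nonneg (mul_nonneg (by linarith : (0:ℝ) ≤ c) hL0.le)
          (by linarith : (0:ℝ) ≤ t - 1),
        mul_nonneg (by linarith : (0:ℝ) ≤ c - 4) hL0.le]
    have hfin : Real.exp (-(4 * L)) ≤ 1 / (32 * (R:ℝ)) := by
      have : Real.exp (-(4*L)) = ((R:ℝ)^4)⁻¹ := by
        rw [Real.exp_neg]
        congr 1
        rw [show (4:ℝ)*L = (4:ℕ)*L by norm_num, Real.exp_nat_mul, hLdef, Real.exp_log hR0]
      rw [this, one_div, inv_le_inv₀ (by positivity) (by positivity)]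
      have h32 : (32:ℝ) ≤ (R:ℝ)^3 := by
        calc (32:ℝ) ≤ 33^3 := by norm_num
          _ ≤ (R:ℝ)^3 := pow_le_pow_left₀ (by norm_num) hRR 3
      calc 32*(R:ℝ) ≤ (R:ℝ)^3 * R := mul_le_mul_of_nonneg_right h32 hR0.le
        _ = (R:ℝ)^4 := by ring
    exact le_trans hcher (le_trans hb (le_trans hexp_le hfin))
  -- transfer to ℝ≥0∞
  have hmono : μ {ω | (2 * (m * n : ℝ) / τ) * Real.log R
        < ((Finset.univ.filter (fun x => keep x ω = true ∧ 0 < h x)).card : ℝ)}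
      ≤ μ {ω | a ≤ (∑ x ∈ s, X x) ω} := measure_mono hsub
  have hne : ((1:ℝ≥0∞) / (32 * R)) ≠ ⊤ := by
    simp [ENNReal.div_eq_top]
    omega
  refine le_trans hmono ?_
  rw [← ENNReal.toReal_le_toReal (measure_ne_top μ _) hne]
  refine le_trans hreal ?_
  rw [ENNReal.toReal_div, ENNReal.toReal_mul]
  simp
end

section
/- Count-sketch single-bucket variance bound: let x be a fixed element, let g : [d] → [w] be a uniformly random hash, and let s_{r} : [d] → {±1}, r ∈ [R], be independent uniformly random sign hashes (fresh per round, independent of g). For histograms h^{(r)} over [d], define the error E = Σ_{x' ≠ x} 1[g(x') = g(x)] Σ_{r=1}^R s_r(x') s_r(x) h^{(r)}(x'). Then E[E] = 0 and E[E²] ≤ (1/w) · (max_{x'≠x} h^{[R]}(x')) · (Σ_{x'≠x} h^{[R]}(x')), where h^{[R]}(x') = Σ_r h^{(r)}(x'). -/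
open scoped Classical

noncomputable def csSign : Bool → ℝ := fun b => if b then 1 else -1

lemma csSign_not (b : Bool) : csSign (!b) = - csSign b := by cases b <;> simp [csSign]
lemma csSign_mul_self (b : Bool) : csSign b * csSign b = 1 := by cases b <;> norm_num [csSign]

def csFlip {R d : ℕ} (r : Fin R) (y : Fin d) (s : Fin R → Fin d → Bool) : Fin R → Fin d → Bool :=
  fun r' y' => if r' = r ∧ y' = y then !s r' y' else s r' y'

lemma csFlip_invol {R d : ℕ} (r : Fin R) (y : Fin d) :
    Function.Involutive (csFlip r y) := by
  intro s; funext r' y'; unfold csFlip; by_cases hc : r' = r ∧ y' = y <;> simp [hc]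

lemma csFlip_apply_self {R d : ℕ} (r : Fin R) (y : Fin d) (s) : csFlip r y s r y = !s r y := by
  simp [csFlip]

lemma csFlip_apply_ne {R d : ℕ} (r : Fin R) (y : Fin d) (s) (r' : Fin R) (y' : Fin d)
    (hc : ¬(r' = r ∧ y' = y)) : csFlip r y s r' y' = s r' y' := by simp [csFlip, hc]

lemma sum_flip_zero {R d : ℕ} (r : Fin R) (y : Fin d) (F : (Fin R → Fin d → Bool) → ℝ)
    (hF : ∀ s, F (csFlip r y s) = - F s) :
    ∑ s : Fin R → Fin d → Bool, F s = 0 := by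
  have hbij := (csFlip_invol r y).bijective
  have h1 : ∑ s : Fin R → Fin d → Bool, F (csFlip r y s) = ∑ s : Fin R → Fin d → Bool, F s :=
    Function.Bijective.sum_comp hbij F
  have h2 : ∑ s : Fin R → Fin d → Bool, F (csFlip r y s) = - ∑ s : Fin R → Fin d → Bool, F s := by
    simp [hF]
  linarith

lemma sum_sign_pair {R d : ℕ} (x x' : Fin d) (hx : x' ≠ x) (r : Fin R) :
    ∑ s : Fin R → Fin d → Bool, csSign (s r x') * csSign (s r x) = 0 := by
  apply sum_flip_zero r x'
  intro s
  rw [csFlip_apply_self, csFlip_apply_ne r x' s r x (fun hc => hx hc.2.symm), csSign_not]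
  ring

lemma sum_sign_quad {R d : ℕ} (x x' x'' : Fin d) (hx' : x' ≠ x)
    (r r' : Fin R) (hd : ¬(r' = r ∧ x'' = x')) :
    ∑ s : Fin R → Fin d → Bool,
      csSign (s r x') * csSign (s r x) * (csSign (s r' x'') * csSign (s r' x)) = 0 := by
  apply sum_flip_zero r x'
  intro s
  rw [csFlip_apply_self, csFlip_apply_ne r x' s r x (fun hc => hx' hc.2.symm),
      csFlip_apply_ne r x' s r' x'' hd,
      csFlip_apply_ne r x' s r' x (fun hc => hx' hc.2.symm), csSign_not]
  ring

lemma sum_sign_prod {R d : ℕ} (h : Fin R → Fin d → ℝ) (x x' x'' : Fin d)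
    (hx' : x' ≠ x) (hx'' : x'' ≠ x) (r r' : Fin R) :
    ∑ s : Fin R → Fin d → Bool,
      (csSign (s r x') * csSign (s r x) * h r x') *
        (csSign (s r' x'') * csSign (s r' x) * h r' x'')
    = if r' = r ∧ x'' = x' then
        (Fintype.card (Fin R → Fin d → Bool) : ℝ) * (h r x' * h r x') else 0 := by
  by_cases hd : r' = r ∧ x'' = x'
  · obtain ⟨rfl, rfl⟩ := hd
    rw [if_pos ⟨rfl, rfl⟩]
    have hterm : ∀ s : Fin R → Fin d → Bool,
        (csSign (s r' x'') * csSign (s r' x) * h r' x'') *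
          (csSign (s r' x'') * csSign (s r' x) * h r' x'') = h r' x'' * h r' x'' := by
      intro s
      calc (csSign (s r' x'') * csSign (s r' x) * h r' x'') *
            (csSign (s r' x'') * csSign (s r' x) * h r' x'')
          = (csSign (s r' x'') * csSign (s r' x'')) *
              ((csSign (s r' x) * csSign (s r' x)) * (h r' x'' * h r' x'')) := by ring
        _ = h r' x'' * h r' x'' := by rw [csSign_mul_self, csSign_mul_self, one_mul, one_mul]
    simp only [hterm]
    rw [Finset.sum_const, Finset.card_univ, nsmul_eq_mul]
  · rw [if_neg hd]
    have hterm : ∀ s : Fin R → Fin d → Bool,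
        (csSign (s r x') * csSign (s r x) * h r x') *
          (csSign (s r' x'') * csSign (s r' x) * h r' x'')
        = (csSign (s r x') * csSign (s r x) * (csSign (s r' x'') * csSign (s r' x))) *
            (h r x' * h r' x'') := by intro s; ring
    simp only [hterm]
    rw [← Finset.sum_mul, sum_sign_quad x x' x'' hx' r r' hd, zero_mul]

lemma sum_loc {d w : ℕ} (hw : 0 < w) (x x' : Fin d) (hx : x' ≠ x) :
    ∑ g : Fin d → Fin w, (if g x' = g x then (1:ℝ) else 0)
      = (Fintype.card (Fin d → Fin w) : ℝ) / w := by
  have : Nonempty (Fin w) := ⟨⟨0, hw⟩⟩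
  set e := Equiv.piSplitAt x' (fun _ : Fin d => Fin w) with he
  have hsum : ∑ g : Fin d → Fin w, (if g x' = g x then (1:ℝ) else 0)
      = ∑ p : Fin w × (∀ y : {y : Fin d // y ≠ x'}, Fin w),
          (if (e.symm p) x' = (e.symm p) x then (1:ℝ) else 0) :=
    (Equiv.sum_comp e.symm _).symm
  have hval : ∀ p : Fin w × (∀ y : {y : Fin d // y ≠ x'}, Fin w),
      (e.symm p) x' = p.1 ∧ (e.symm p) x = p.2 ⟨x, fun hxx => hx hxx.symm⟩ := by
    intro p
    constructor
    · simp [he, Equiv.piSplitAt_symm_apply]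
    · rw [he, Equiv.piSplitAt_symm_apply, dif_neg (fun hxx : x = x' => hx hxx.symm)]
  have hcard : (Fintype.card (Fin d → Fin w) : ℝ)
      = w * Fintype.card (∀ y : {y : Fin d // y ≠ x'}, Fin w) := by
    rw [Fintype.card_congr e, Fintype.card_prod, Fintype.card_fin]
    push_cast; ring
  rw [hsum, hcard]
  rw [Fintype.sum_prod_type_right]
  have hv : ∀ q : (∀ y : {y : Fin d // y ≠ x'}, Fin w),
      ∑ v : Fin w, (if (e.symm (v, q)) x' = (e.symm (v, q)) x then (1:ℝ) else 0) = 1 := by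
    intro q
    have : ∀ v : Fin w, (if (e.symm (v, q)) x' = (e.symm (v, q)) x then (1:ℝ) else 0)
        = if v = q ⟨x, fun hxx => hx hxx.symm⟩ then (1:ℝ) else 0 := by
      intro v; rw [(hval (v, q)).1, (hval (v, q)).2]
    simp [this]
  simp only [hv]
  rw [Finset.sum_const, Finset.card_univ]
  field_simp
  simp

/-- Count-sketch single-bucket error: with a uniformly random location hash
`g : [d] → [w]` and fresh uniformly random sign hashes `s_r : [d] → {±1}` per round,
the error `E = Σ_{x'≠x} 1[g(x')=g(x)] Σ_r s_r(x') s_r(x) h^{(r)}(x')` satisfies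
`E[E] = 0` and `E[E²] ≤ (1/w)·(max_{x'≠x} h^{[R]}(x'))·(Σ_{x'≠x} h^{[R]}(x'))`. -/
theorem countsketch_variance (d w R : ℕ) (hw : 0 < w) (hR : 0 < R)
    (h : Fin R → Fin d → ℝ) (hh : ∀ r x', 0 ≤ h r x') (x : Fin d)
    (hne : (Finset.univ.erase x).Nonempty) :
    let sign : Bool → ℝ := fun b => if b then 1 else -1
    let Err : (Fin d → Fin w) × (Fin R → Fin d → Bool) → ℝ := fun gs =>
      ∑ x' ∈ Finset.univ.erase x, (if gs.1 x' = gs.1 x then (1 : ℝ) else 0) *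
        ∑ r, sign (gs.2 r x') * sign (gs.2 r x) * h r x'
    ((∑ gs : (Fin d → Fin w) × (Fin R → Fin d → Bool), Err gs) /
        (Fintype.card ((Fin d → Fin w) × (Fin R → Fin d → Bool)) : ℝ) = 0)
    ∧ (∑ gs : (Fin d → Fin w) × (Fin R → Fin d → Bool), (Err gs) ^ 2) /
        (Fintype.card ((Fin d → Fin w) × (Fin R → Fin d → Bool)) : ℝ)
      ≤ (1 / w) * ((Finset.univ.erase x).sup' hne (fun x' => ∑ r, h r x')) *
          (∑ x' ∈ Finset.univ.erase x, ∑ r, h r x') := by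
  intro sign Err
  have hExx : ∀ x' ∈ Finset.univ.erase x, x' ≠ x := fun x' hx' => Finset.ne_of_mem_erase hx'
  set E := Finset.univ.erase x with hE
  set K : ℝ := (Fintype.card (Fin R → Fin d → Bool) : ℝ) with hK
  -- first moment, per g
  have hS0 : ∀ g : Fin d → Fin w, ∑ s : Fin R → Fin d → Bool, Err (g, s) = 0 := by
    intro g
    have hrfl : ∀ s : Fin R → Fin d → Bool, Err (g, s) = ∑ x' ∈ E,
        (if g x' = g x then (1:ℝ) else 0) *
          ∑ r, csSign (s r x') * csSign (s r x) * h r x' := fun s => rfl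
    simp only [hrfl]
    rw [Finset.sum_comm]
    apply Finset.sum_eq_zero
    intro x' hx'
    rw [← Finset.mul_sum]
    have hz : ∑ s : Fin R → Fin d → Bool,
        ∑ r, csSign (s r x') * csSign (s r x) * h r x' = 0 := by
      rw [Finset.sum_comm]
      apply Finset.sum_eq_zero
      intro r _
      rw [← Finset.sum_mul, sum_sign_pair x x' (hExx x' hx') r, zero_mul]
    rw [hz, mul_zero]
  -- second moment, per g
  have hS2 : ∀ g : Fin d → Fin w, ∑ s : Fin R → Fin d → Bool, Err (g, s) ^ 2
      = K * ∑ x' ∈ E, (if g x' = g x then (1:ℝ) else 0) * ∑ r, h r x' * h r x' := by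
    intro g
    set c : Fin d → ℝ := fun x' => if g x' = g x then (1:ℝ) else 0 with hc
    have expand : ∀ s : Fin R → Fin d → Bool, Err (g, s) ^ 2
        = ∑ x' ∈ E, ∑ x'' ∈ E, ∑ r, ∑ r',
            (c x' * c x'') * ((csSign (s r x') * csSign (s r x) * h r x') *
              (csSign (s r' x'') * csSign (s r' x) * h r' x'')) := by
      intro s
      have hrfl : Err (g, s)
          = ∑ x' ∈ E, c x' * ∑ r, csSign (s r x') * csSign (s r x) * h r x' := rfl
      rw [hrfl, sq, Finset.sum_mul_sum]
      refine Finset.sum_congr rfl fun x' _ => ?_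
      refine Finset.sum_congr rfl fun x'' _ => ?_
      rw [mul_mul_mul_comm, Finset.sum_mul_sum]
      simp only [Finset.mul_sum]
    calc ∑ s : Fin R → Fin d → Bool, Err (g, s) ^ 2
        = ∑ s : Fin R → Fin d → Bool, ∑ x' ∈ E, ∑ x'' ∈ E, ∑ r, ∑ r',
            (c x' * c x'') * ((csSign (s r x') * csSign (s r x) * h r x') *
              (csSign (s r' x'') * csSign (s r' x) * h r' x'')) :=
          Finset.sum_congr rfl fun s _ => expand s
      _ = ∑ x' ∈ E, ∑ x'' ∈ E, ∑ r, ∑ r', (c x' * c x'') *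
            ∑ s : Fin R → Fin d → Bool, (csSign (s r x') * csSign (s r x) * h r x') *
              (csSign (s r' x'') * csSign (s r' x) * h r' x'') := by
          rw [Finset.sum_comm]
          refine Finset.sum_congr rfl fun x' _ => ?_
          rw [Finset.sum_comm]
          refine Finset.sum_congr rfl fun x'' _ => ?_
          rw [Finset.sum_comm]
          refine Finset.sum_congr rfl fun r _ => ?_
          rw [Finset.sum_comm]
          refine Finset.sum_congr rfl fun r' _ => ?_
          rw [← Finset.mul_sum]
      _ = ∑ x' ∈ E, ∑ x'' ∈ E, ∑ r, ∑ r', (c x' * c x'') *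
            (if r' = r ∧ x'' = x' then K * (h r x' * h r x') else 0) := by
          refine Finset.sum_congr rfl fun x' hx' => ?_
          refine Finset.sum_congr rfl fun x'' hx'' => ?_
          refine Finset.sum_congr rfl fun r _ => ?_
          refine Finset.sum_congr rfl fun r' _ => ?_
          rw [sum_sign_prod h x x' x'' (hExx x' hx') (hExx x'' hx'') r r']
      _ = ∑ x' ∈ E, c x' * (K * ∑ r, h r x' * h r x') := by
          refine Finset.sum_congr rfl fun x' hx' => ?_
          rw [Finset.sum_eq_single x']
          · have hcc : c x' * c x' = c x' := by rw [hc]; dsimp only; split <;> norm_num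
            simp only [eq_self_iff_true, and_true]
            have hr : ∀ r : Fin R, (∑ r' : Fin R, (c x' * c x') *
                (if r' = r then K * (h r x' * h r x') else 0))
                = c x' * (K * (h r x' * h r x')) := by
              intro r
              rw [← Finset.mul_sum]
              rw [Finset.sum_ite_eq' Finset.univ r (fun _ => K * (h r x' * h r x'))]
              rw [if_pos (Finset.mem_univ r), hcc]
            simp only [hr]
            rw [← Finset.mul_sum, ← Finset.mul_sum]
          · intro x'' _ hx''ne
            apply Finset.sum_eq_zero; intro r _
            apply Finset.sum_eq_zero; intro r' _
            rw [if_neg (fun hcon => hx''ne hcon.2), mul_zero]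
          · intro habs; exact absurd hx' habs
      _ = K * ∑ x' ∈ E, c x' * ∑ r, h r x' * h r x' := by
          rw [Finset.mul_sum]
          refine Finset.sum_congr rfl fun x' _ => ?_
          ring
  constructor
  · have hz : (∑ gs : (Fin d → Fin w) × (Fin R → Fin d → Bool), Err gs) = 0 := by
      rw [Fintype.sum_prod_type]
      exact Finset.sum_eq_zero fun g _ => hS0 g
    rw [hz, zero_div]
  · have htotal : (∑ gs : (Fin d → Fin w) × (Fin R → Fin d → Bool), Err gs ^ 2)
        = K * ((Fintype.card (Fin d → Fin w) : ℝ) / w) * ∑ x' ∈ E, ∑ r, h r x' * h r x' := by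
      rw [Fintype.sum_prod_type]
      simp only [hS2]
      rw [← Finset.mul_sum, mul_assoc]
      congr 1
      rw [Finset.sum_comm, Finset.mul_sum]
      refine Finset.sum_congr rfl fun x' hx' => ?_
      rw [← Finset.sum_mul, sum_loc hw x x' (hExx x' hx')]
    have hD : (Fintype.card ((Fin d → Fin w) × (Fin R → Fin d → Bool)) : ℝ)
        = (Fintype.card (Fin d → Fin w) : ℝ) * K := by
      rw [Fintype.card_prod]; push_cast; rw [hK]
    have hnw : Nonempty (Fin w) := ⟨⟨0, hw⟩⟩
    have hcardG : (0:ℝ) < (Fintype.card (Fin d → Fin w) : ℝ) := by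
      exact_mod_cast Fintype.card_pos
    have hcardS : (0:ℝ) < K := by rw [hK]; exact_mod_cast Fintype.card_pos
    have hwR : (0:ℝ) < (w:ℝ) := by exact_mod_cast hw
    rw [htotal, hD]
    have hsimp : K * ((Fintype.card (Fin d → Fin w) : ℝ) / w) *
          (∑ x' ∈ E, ∑ r, h r x' * h r x') /
          ((Fintype.card (Fin d → Fin w) : ℝ) * K)
        = (1 / w) * ∑ x' ∈ E, ∑ r, h r x' * h r x' := by
      field_simp
    rw [hsimp]
    have hMx : ∀ x' ∈ E, (∑ r, h r x') ≤ E.sup' hne (fun x' => ∑ r, h r x') :=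
      fun x' hx' => Finset.le_sup' (fun y => ∑ r, h r y) hx'
    have key : ∑ x' ∈ E, ∑ r, h r x' * h r x' ≤ (E.sup' hne fun x' => ∑ r, h r x') * ∑ x' ∈ E, ∑ r, h r x' := by
      rw [Finset.mul_sum]
      apply Finset.sum_le_sum
      intro x' hx'
      calc ∑ r, h r x' * h r x' ≤ ∑ r, h r x' * (∑ r', h r' x') := by
            apply Finset.sum_le_sum
            intro r _
            exact mul_le_mul_of_nonneg_left
              (Finset.single_le_sum (fun r' _ => hh r' x') (Finset.mem_univ r)) (hh r x')
        _ = (∑ r, h r x') * (∑ r', h r' x') := (Finset.sum_mul _ _ _).symm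
        _ ≤ (E.sup' hne fun x' => ∑ r, h r x') * (∑ r', h r' x') := mul_le_mul_of_nonneg_right (hMx x' hx')
            (Finset.sum_nonneg fun r' _ => hh r' x')
    calc (1 / (w:ℝ)) * ∑ x' ∈ E, ∑ r, h r x' * h r x'
        ≤ (1 / (w:ℝ)) * ((E.sup' hne fun x' => ∑ r, h r x') * ∑ x' ∈ E, ∑ r, h r x') := by
          apply mul_le_mul_of_nonneg_left key
          positivity
      _ = (1 / (w:ℝ)) * (E.sup' hne fun x' => ∑ r, h r x') * (∑ x' ∈ E, ∑ r, h r x') := by ring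
end
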